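/- Let g be a real number with 1 + 12g > 0 and g ≠ 0, and set a = (√(1+12g) − 1)/(6g) (so that 3g·a^2 + a − 1 = 0). Define a sequence (m_k)_{k≥0} of real numbers by m_k = 0 for all odd k, and m_{2ℓ} = a^ℓ · ((2ℓ)!/(ℓ!·(ℓ+2)!)) · (2ℓ + 2 − ℓ·a) for all ℓ ≥ 0 (in particular m_0 = 1). Then for every ℓ ≥ 0, m_{ℓ+1} + g·m_{ℓ+3} = Σ_{k=0}^{ℓ−1} m_k · m_{ℓ−1−k}. -/

import Mathlib

open Finset

private lemma cat_fac_nat (ℓ : ℕ) :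
    (2*ℓ).factorial = catalan ℓ * ℓ.factorial * (ℓ+1).factorial := by
  have h2 := Nat.choose_mul_factorial_mul_factorial (show ℓ ≤ 2*ℓ by omega)
  rw [show 2*ℓ - ℓ = ℓ from by omega] at h2
  have h1 := succ_mul_catalan_eq_centralBinom ℓ
  rw [Nat.centralBinom] at h1
  rw [← h2, ← h1, Nat.factorial_succ]
  ring

private lemma cat_ratio (n : ℕ) :
    ((n:ℝ)+2) * (catalan (n+1) : ℝ) = 2*(2*(n:ℝ)+1) * (catalan n : ℝ) := by
  have h := Nat.succ_mul_centralBinom_succ n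
  rw [← succ_mul_catalan_eq_centralBinom, ← succ_mul_catalan_eq_centralBinom] at h
  have hr : ((n:ℝ)+1) * (((n:ℝ)+1+1) * (catalan (n+1):ℝ))
      = 2*(2*(n:ℝ)+1)*(((n:ℝ)+1)*(catalan n:ℝ)) := by exact_mod_cast h
  have h' : ((n:ℝ)+1) * (((n:ℝ)+2) * (catalan (n+1) : ℝ))
      = ((n:ℝ)+1) * (2*(2*(n:ℝ)+1) * (catalan n : ℝ)) := by linear_combination hr
  exact mul_left_cancel₀ (by positivity) h'

private lemma cat_conv (n : ℕ) :
    ((catalan (n+1) : ℝ)) = ∑ j ∈ range (n+1), (catalan j : ℝ) * (catalan (n-j) : ℝ) := by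
  rw [catalan_succ]
  push_cast
  rw [Fin.sum_univ_eq_sum_range (fun i => ((catalan i : ℝ)) * (catalan (n-i) : ℝ)) (n+1)]

private lemma conv_T1 (n : ℕ) :
    ∑ j ∈ range (n+1), (catalan j : ℝ) * (catalan (n+1-j) : ℝ)
      = (catalan (n+2) : ℝ) - (catalan (n+1) : ℝ) := by
  have h := cat_conv (n+1)
  rw [Finset.sum_range_succ] at h
  simp only [Nat.sub_self, catalan_zero, Nat.cast_one, mul_one] at h
  linarith [h]

private lemma conv_T1' (n : ℕ) :
    ∑ j ∈ range (n+1), (catalan (j+1) : ℝ) * (catalan (n-j) : ℝ)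
      = (catalan (n+2) : ℝ) - (catalan (n+1) : ℝ) := by
  rw [← conv_T1 n]
  rw [← Finset.sum_range_reflect (fun j => (catalan (j+1) : ℝ) * (catalan (n-j) : ℝ)) (n+1)]
  apply Finset.sum_congr rfl
  intro j hj
  have hjn : j ≤ n := by simpa [Nat.lt_succ_iff] using Finset.mem_range.mp hj
  rw [show n+1-1-j = n-j from by omega, show n-(n-j) = j from by omega,
      show n-j+1 = n+1-j from by omega, mul_comm]

private lemma conv_T2 (n : ℕ) :
    ∑ j ∈ range (n+1), (catalan (j+1) : ℝ) * (catalan (n+1-j) : ℝ)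
      = (catalan (n+3) : ℝ) - 2*(catalan (n+2) : ℝ) := by
  have h := cat_conv (n+2)
  rw [Finset.sum_range_succ'] at h
  simp only [Nat.sub_zero, catalan_zero, Nat.cast_one, one_mul] at h
  rw [Finset.sum_range_succ] at h
  rw [show n+2-(n+1+1) = 0 from by omega] at h
  simp only [catalan_zero, Nat.cast_one, mul_one] at h
  have hc : ∑ j ∈ range (n+1), (catalan (j+1) : ℝ) * (catalan (n+2-(j+1)) : ℝ)
      = ∑ j ∈ range (n+1), (catalan (j+1) : ℝ) * (catalan (n+1-j) : ℝ) := by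
    apply Finset.sum_congr rfl
    intro j hj
    rw [show n+2-(j+1) = n+1-j from by omega]
  rw [hc] at h
  linarith [h]

private lemma sum_even_aux (f : ℕ → ℝ) (h : ∀ k, Odd k → f k = 0) (n : ℕ) :
    ∑ k ∈ range (2*n+1), f k = ∑ j ∈ range (n+1), f (2*j) := by
  induction n with
  | zero => simp
  | succ n ih =>
    rw [show 2*(n+1)+1 = (2*n+1)+1+1 from by ring, Finset.sum_range_succ,
        Finset.sum_range_succ, ih, Finset.sum_range_succ (fun j => f (2*j)) (n+1),
        h (2*n+1) ⟨n, by ring⟩]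
    rw [show 2*n+1+1 = 2*(n+1) from by ring]
    ring

/-- The explicit moment sequence of the quartic one-matrix model solves the
large-N Schwinger–Dyson equations. -/
theorem stmt_3 (g : ℝ) (hg₁ : 1 + 12 * g > 0) (hg₂ : g ≠ 0) (a : ℝ)
    (ha : a = (Real.sqrt (1 + 12 * g) - 1) / (6 * g))
    (m : ℕ → ℝ)
    (hodd : ∀ k, Odd k → m k = 0)
    (heven : ∀ ℓ : ℕ, m (2 * ℓ) =
      a ^ ℓ * ((Nat.factorial (2 * ℓ) : ℝ) /
        ((Nat.factorial ℓ : ℝ) * (Nat.factorial (ℓ + 2) : ℝ))) *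
        (2 * (ℓ : ℝ) + 2 - (ℓ : ℝ) * a)) :
    ∀ ℓ : ℕ, m (ℓ + 1) + g * m (ℓ + 3) =
      ∑ k ∈ Finset.range ℓ, m k * m (ℓ - 1 - k) := by
  have hga : g * a^2 = (1 - a)/3 := by
    have hs : Real.sqrt (1+12*g) ^ 2 = 1 + 12*g := Real.sq_sqrt hg₁.le
    rw [ha]
    field_simp
    ring_nf at hs ⊢; nlinarith [hs]
  have hm2 : ∀ j : ℕ, m (2*j)
      = a^j * ((2+a)/3 * (catalan j : ℝ) + (1-a)/3 * (catalan (j+1) : ℝ)) := by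
    intro j
    rw [heven j]
    have e1 : ((2*j).factorial : ℝ)
        = (catalan j : ℝ) * (j.factorial : ℝ) * ((j+1).factorial : ℝ) := by
      exact_mod_cast congrArg (Nat.cast : ℕ → ℝ) (cat_fac_nat j)
    have e2 : ((j+2).factorial : ℝ) = ((j:ℝ)+2) * ((j+1).factorial : ℝ) := by
      rw [show j+2 = (j+1)+1 from rfl, Nat.factorial_succ]
      push_cast; ring
    have e3 := cat_ratio j
    have hf1 : (j.factorial : ℝ) ≠ 0 := by exact_mod_cast j.factorial_ne_zero
    have hf2 : ((j+1).factorial : ℝ) ≠ 0 := by exact_mod_cast (j+1).factorial_ne_zero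
    have hj2 : ((j:ℝ)+2) ≠ 0 := by positivity
    rw [e1, e2]
    field_simp
    linear_combination (a^j * (a-1)) * e3
  intro ℓ
  rcases Nat.even_or_odd ℓ with ⟨n, hn⟩ | ⟨n, hn⟩
  · subst hn
    rw [hodd (n+n+1) ⟨n, by ring⟩, hodd (n+n+3) ⟨n+1, by ring⟩]
    rw [mul_zero, add_zero]
    symm
    apply Finset.sum_eq_zero
    intro k hk
    have hk' : k < n + n := Finset.mem_range.mp hk
    rcases Nat.even_or_odd k with ⟨t, ht⟩ | hko
    · have hoddk : Odd (n+n-1-k) := ⟨n - t - 1, by omega⟩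
      rw [hodd _ hoddk, mul_zero]
    · rw [hodd k hko, zero_mul]
  · subst hn
    have hsub : ∀ k, 2*n+1-1-k = 2*n-k := fun k => by omega
    simp only [hsub]
    rw [sum_even_aux (fun k => m k * m (2*n - k))
        (fun k hk => by show m k * m (2*n - k) = 0; rw [hodd k hk, zero_mul]) n]
    have hterm : ∀ j ∈ Finset.range (n+1),
        m (2*j) * m (2*n - 2*j)
          = a^n * ((2+a)/3*((2+a)/3) * ((catalan j:ℝ) * (catalan (n-j):ℝ))
            + (2+a)/3*((1-a)/3) * ((catalan j:ℝ) * (catalan (n+1-j):ℝ))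
            + (1-a)/3*((2+a)/3) * ((catalan (j+1):ℝ) * (catalan (n-j):ℝ))
            + (1-a)/3*((1-a)/3) * ((catalan (j+1):ℝ) * (catalan (n+1-j):ℝ))) := by
      intro j hj
      have hjn : j ≤ n := by have := Finset.mem_range.mp hj; omega
      rw [show 2*n - 2*j = 2*(n-j) from by omega, hm2 j, hm2 (n-j),
          show n-j+1 = n+1-j from by omega]
      have hp : a^j * a^(n-j) = a^n := by
        rw [← pow_add]; congr 1; omega
      linear_combination (((2+a)/3 * (catalan j:ℝ) + (1-a)/3 * (catalan (j+1):ℝ)) *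
        ((2+a)/3 * (catalan (n-j):ℝ) + (1-a)/3 * (catalan (n+1-j):ℝ))) * hp
    rw [Finset.sum_congr rfl hterm, ← Finset.mul_sum]
    rw [Finset.sum_add_distrib, Finset.sum_add_distrib, Finset.sum_add_distrib]
    rw [← Finset.mul_sum, ← Finset.mul_sum, ← Finset.mul_sum, ← Finset.mul_sum]
    rw [← cat_conv n, conv_T1 n, conv_T1' n, conv_T2 n]
    rw [show 2*n+1+1 = 2*(n+1) from by ring, show 2*n+1+3 = 2*(n+2) from by ring,
        hm2 (n+1), hm2 (n+2)]
    have pa1 : a^(n+1) = a^n * a := pow_succ a n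
    have pa2 : a^(n+2) = a^n * a^2 := pow_add a n 2
    linear_combination ((2+a)/3*(catalan (n+1):ℝ) + (1-a)/3*(catalan (n+2):ℝ)) * pa1
      + g*((2+a)/3*(catalan (n+2):ℝ) + (1-a)/3*(catalan (n+3):ℝ)) * pa2
      + (a^n*((2+a)/3*(catalan (n+2):ℝ) + (1-a)/3*(catalan (n+3):ℝ))) * hga
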